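/- Let F be a temporal path with vertices v₀,…,v_{n−1} and let σ_i be the successor map: for ℓ ∈ λ(e_i), with ℓ⁺ = succ(ℓ+1, λ(e_i)) and (for i < n−2) ℓ' = succ(ℓ, λ(e_{i+1})), σ_i(ℓ) = (ℓ⁺, i) if ℓ⁺ ≤ ℓ' (and ℓ⁺ finite when i = n−2), σ_i(ℓ) = (ℓ', i+1) if ℓ' < ℓ⁺, and undefined if both are +∞. Then in the resulting forest 𝓕 whose nodes are pairs (ℓ, i) with ℓ ∈ λ(e_i) and parent map σ, every node has at most 2 children: at most one child of the form (·, i) and at most one of the form (·, i−1). -/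
import Mathlib


/-- Embedding of `ℤ` into `EReal`. -/
def iE (n : ℤ) : EReal := ((n : ℝ) : EReal)

/-- `succ t X` : the minimum element of `X ⊆ ℤ` that is `≥ t`, or `+∞` if none. -/
noncomputable def eSucc (t : EReal) (X : Set ℤ) : EReal :=
  sInf {y : EReal | ∃ x ∈ X, y = iE x ∧ t ≤ iE x}

/-- The parent map `σ` of the successor forest `𝓕` of a temporal path with `m` edges
`e_0, …, e_{m−1}` labelled by `lam`. `PParent lam m (ℓ, i) (q, j)` holds iff the
node `(q, j)` is `σ_i(ℓ)`: with `ℓ⁺ = succ(ℓ+1, λ(e_i))` and (for `i < m−1`)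
`ℓ' = succ(ℓ, λ(e_{i+1}))`, the parent is `(ℓ⁺, i)` if `ℓ⁺ ≤ ℓ'` (or `i = m−1` and
`ℓ⁺ < +∞`), and `(ℓ', i+1)` if `ℓ' < ℓ⁺`; undefined if both are `+∞`. -/
def PParent (lam : ℕ → Set ℤ) (m : ℕ) (x y : ℤ × ℕ) : Prop :=
  x.1 ∈ lam x.2 ∧ x.2 < m ∧
    ((y.2 = x.2 ∧ y.1 ∈ lam x.2 ∧ iE y.1 = eSucc (iE (x.1 + 1)) (lam x.2) ∧
        (x.2 + 1 = m ∨ iE y.1 ≤ eSucc (iE x.1) (lam (x.2 + 1)))) ∨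
      (y.2 = x.2 + 1 ∧ x.2 + 1 < m ∧ y.1 ∈ lam (x.2 + 1) ∧
        iE y.1 = eSucc (iE x.1) (lam (x.2 + 1)) ∧
        iE y.1 < eSucc (iE (x.1 + 1)) (lam x.2)))

lemma iE_le_iff {a b : ℤ} : iE a ≤ iE b ↔ a ≤ b := by
  simp [iE]

lemma eSucc_le {t x : ℤ} {X : Set ℤ} (hx : x ∈ X) (h : t ≤ x) :
    eSucc (iE t) X ≤ iE x :=
  sInf_le ⟨x, hx, rfl, iE_le_iff.2 h⟩

lemma eSucc_eq_imp {t q : ℤ} {X : Set ℤ} (h : eSucc (iE t) X = iE q) :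
    q ∈ X ∧ t ≤ q := by
  by_cases hne : ∃ x, x ∈ X ∧ t ≤ x
  · obtain ⟨mn, ⟨hmX, hmt⟩, hmin⟩ :=
      Int.exists_least_of_bdd (P := fun z => z ∈ X ∧ t ≤ z)
        ⟨t, fun z hz => hz.2⟩ hne
    have hS : eSucc (iE t) X = iE mn := by
      refine le_antisymm (eSucc_le hmX hmt) (le_sInf ?_)
      rintro y ⟨x, hx, rfl, hle⟩
      exact iE_le_iff.2 (hmin x ⟨hx, iE_le_iff.1 hle⟩)
    have hqm : q = mn := by
      have he : iE q = iE mn := h ▸ hS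
      exact le_antisymm (iE_le_iff.1 he.le) (iE_le_iff.1 he.ge)
    subst hqm; exact ⟨hmX, hmt⟩
  · exfalso
    have hempty : {y : EReal | ∃ x ∈ X, y = iE x ∧ iE t ≤ iE x} = ∅ := by
      ext y
      simp only [Set.mem_setOf_eq, Set.mem_empty_iff_false, iff_false, not_exists]
      rintro x ⟨hx, rfl, hle⟩
      exact hne ⟨x, hx, iE_le_iff.1 hle⟩
    have : eSucc (iE t) X = ⊤ := by rw [eSucc, hempty, sInf_empty]
    rw [h] at this
    exact (EReal.coe_ne_top _) this

/-- In the successor forest of a temporal path, every node `(q, j)` has at most two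
children: at most one child of the form `(·, j)`, at most one of the form `(·, j−1)`,
hence at most `2` children overall. -/
theorem pParent_at_most_two_children (lam : ℕ → Set ℤ) (m : ℕ) (q : ℤ) (j : ℕ)
    (hq : q ∈ lam j) (hj : j < m) :
    (∀ a b : ℤ × ℕ, PParent lam m a (q, j) → PParent lam m b (q, j) →
        a.2 = b.2 → a = b) ∧
      (∀ a : ℤ × ℕ, PParent lam m a (q, j) → a.2 = j ∨ a.2 + 1 = j) ∧
      {a : ℤ × ℕ | PParent lam m a (q, j)}.encard ≤ 2 := by
  have key : ∀ a b : ℤ × ℕ, PParent lam m a (q, j) → PParent lam m b (q, j) →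
      a.2 = b.2 → a = b := by
    rintro ⟨a1, a2⟩ ⟨b1, b2⟩ ⟨haX, ham, ha⟩ ⟨hbX, hbm, hb⟩ (hab : a2 = b2)
    subst hab
    simp only at *
    rcases ha with ⟨hja, hqa, heqa, _⟩ | ⟨hja, hlt2a, hqa, heqa, hlta⟩ <;>
      rcases hb with ⟨hjb, hqb, heqb, _⟩ | ⟨hjb, hlt2b, hqb, heqb, hltb⟩
    · -- both first branch: succ(a1+1) = succ(b1+1) = q on lam a2
      have hA := eSucc_eq_imp heqa.symm
      have hB := eSucc_eq_imp heqb.symm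
      have h1 : ¬ a1 < b1 := by
        intro hlt
        have := eSucc_le (t := a1 + 1) (X := lam a2) hbX (by omega)
        rw [← heqa] at this
        have := iE_le_iff.1 this
        omega
      have h2 : ¬ b1 < a1 := by
        intro hlt
        have := eSucc_le (t := b1 + 1) (X := lam a2) haX (by omega)
        rw [← heqb] at this
        have := iE_le_iff.1 this
        omega
      have : a1 = b1 := by omega
      simp [this]
    · omega
    · omega
    · -- both second branch: succ(a1) = succ(b1) = q on lam (a2+1)
      have hA := eSucc_eq_imp heqa.symm
      have hB := eSucc_eq_imp heqb.symm
      have h1 : ¬ a1 < b1 := by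
        intro hlt
        have hle : eSucc (iE (a1 + 1)) (lam a2) ≤ iE b1 := eSucc_le hbX (by omega)
        have hle2 : iE b1 ≤ iE q := iE_le_iff.2 hB.2
        exact absurd (lt_of_lt_of_le hlta (hle.trans hle2)) (lt_irrefl _)
      have h2 : ¬ b1 < a1 := by
        intro hlt
        have hle : eSucc (iE (b1 + 1)) (lam a2) ≤ iE a1 := eSucc_le haX (by omega)
        have hle2 : iE a1 ≤ iE q := iE_le_iff.2 hA.2
        exact absurd (lt_of_lt_of_le hltb (hle.trans hle2)) (lt_irrefl _)
      have : a1 = b1 := by omega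
      simp [this]
  have snd : ∀ a : ℤ × ℕ, PParent lam m a (q, j) → a.2 = j ∨ a.2 + 1 = j := by
    rintro a ⟨_, _, h | h⟩
    · exact Or.inl h.1.symm
    · exact Or.inr h.1.symm
  refine ⟨key, snd, ?_⟩
  set S : Set (ℤ × ℕ) := {a : ℤ × ℕ | PParent lam m a (q, j)}
  have hinj : Set.InjOn Prod.snd S := fun a ha b hb hab => key a b ha hb hab
  have hsub : Prod.snd '' S ⊆ ({j, j - 1} : Set ℕ) := by
    rintro _ ⟨a, ha, rfl⟩
    rcases snd a ha with h | h
    · exact Set.mem_insert_iff.2 (Or.inl h)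
    · exact Set.mem_insert_iff.2 (Or.inr (Set.mem_singleton_iff.2 (by omega)))
  calc S.encard = (Prod.snd '' S).encard := (hinj.encard_image).symm
    _ ≤ ({j, j - 1} : Set ℕ).encard := Set.encard_mono hsub
    _ ≤ 2 := le_trans (Set.encard_insert_le _ _) (by rw [Set.encard_singleton]; exact le_of_eq one_add_one_eq_two)
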